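/- (Second variation of energy, Claim 3) Let ρ(t) be a smooth curve in the interior of the probability simplex and h(t) a smooth zero-sum perturbation with h(0)=h(1)=0. For g(μ)=L(μ)^†+u₀u₀ᵀ with L linear, d²/dε² g(ρ+εh) = 2 g(ρ+εh)L(h)g(ρ+εh)L(h)g(ρ+εh). Consequently the second variation of the energy E(ρ)=∫₀¹ (1/2)ρ̇ᵀL(ρ)^†ρ̇ dt is δ²E(ρ)(h) = ∫₀¹ (ḣ − L(h)L(ρ)^†ρ̇)ᵀ L(ρ)^† (ḣ − L(h)L(ρ)^†ρ̇) dt, which is nonnegative. -/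

import Mathlib

open Matrix

/-- Discrete gradient matrix `D ∈ ℝ^{|E|×n}` with entries `±√ω_{ij}`. -/
noncomputable def gradMat {n : ℕ} {E : Type} (sE tE : E → Fin n) (w : E → ℝ) :
    Matrix E (Fin n) ℝ :=
  fun e k => if k = sE e then Real.sqrt (w e) else if k = tE e then -Real.sqrt (w e) else 0

/-- Weighted graph Laplacian `L(a) = Dᵀ Θ(a) D` with `Θ(a)` diagonal with entries
`(a_i + a_j)/2` on edges. -/
noncomputable def Lw {n : ℕ} {E : Type} [Fintype E] [DecidableEq E] (sE tE : E → Fin n) (w : E → ℝ)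
    (a : Fin n → ℝ) : Matrix (Fin n) (Fin n) ℝ :=
  (gradMat sE tE w)ᵀ * Matrix.diagonal (fun e => (a (sE e) + a (tE e)) / 2) * gradMat sE tE w

/-- `B` is the Moore–Penrose pseudoinverse of `A` (the four Penrose conditions). -/
def IsPInv {n : ℕ} (A B : Matrix (Fin n) (Fin n) ℝ) : Prop :=
  A * B * A = A ∧ B * A * B = B ∧ (A * B)ᵀ = A * B ∧ (B * A)ᵀ = B * A

/-- Vertex-wise circle product of the gradient fields of two potentials:
`(∇_GΦ ∘ ∇_GΨ)_i = (1/2)·Σ_{j ∈ N(i)} ω_{ij}(Φ_i − Φ_j)(Ψ_i − Ψ_j)`. -/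
noncomputable def circ {n : ℕ} {E : Type} [Fintype E] (sE tE : E → Fin n) (w : E → ℝ)
    (Φ Ψ : Fin n → ℝ) : Fin n → ℝ :=
  fun i => (1 / 2) *
    ∑ e : E, (if sE e = i ∨ tE e = i then
      w e * (Φ (sE e) - Φ (tE e)) * (Ψ (sE e) - Ψ (tE e)) else 0)

/-- The normalized all-ones vector `u₀ = (1/√n)(1,…,1)ᵀ`. -/
noncomputable def onesVec (n : ℕ) : Fin n → ℝ := fun _ => 1 / Real.sqrt n

attribute [local instance] Matrix.normedAddCommGroup Matrix.normedSpace



section aux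

variable {n : ℕ} {E : Type} [Fintype E] [DecidableEq E] (sE tE : E → Fin n) (w : E → ℝ)

lemma dot_transpose_mulVec {α β : Type} [Fintype α] [Fintype β] (M : Matrix α β ℝ)
    (x : β → ℝ) (y : α → ℝ) : x ⬝ᵥ (Mᵀ *ᵥ y) = (M *ᵥ x) ⬝ᵥ y := by
  rw [dotProduct_mulVec, vecMul_transpose]

lemma dot_symm_mulVec {M : Matrix (Fin n) (Fin n) ℝ} (hM : Mᵀ = M)
    (x y : Fin n → ℝ) : (M *ᵥ x) ⬝ᵥ y = x ⬝ᵥ (M *ᵥ y) := by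
  conv_lhs => rw [← hM]
  rw [dotProduct_comm, dot_transpose_mulVec M y x, dotProduct_comm]

lemma Lw_transpose (a : Fin n → ℝ) : (Lw sE tE w a)ᵀ = Lw sE tE w a := by
  unfold Lw
  rw [transpose_mul, transpose_mul, transpose_transpose, diagonal_transpose, Matrix.mul_assoc]

lemma Lw_affine (x y : Fin n → ℝ) (ε : ℝ) :
    Lw sE tE w (fun i => x i + ε * y i) = Lw sE tE w x + ε • Lw sE tE w y := by
  unfold Lw
  have : (Matrix.diagonal (fun e => ((x (sE e) + ε * y (sE e)) + (x (tE e) + ε * y (tE e))) / 2)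
      : Matrix E E ℝ)
      = Matrix.diagonal (fun e => (x (sE e) + x (tE e)) / 2)
        + ε • Matrix.diagonal (fun e => (y (sE e) + y (tE e)) / 2) := by
    ext i j
    by_cases hij : i = j
    · subst hij
      simp [Matrix.diagonal_apply_eq, Matrix.add_apply, Matrix.smul_apply]
      ring
    · simp [Matrix.diagonal_apply_ne _ hij, Matrix.add_apply, Matrix.smul_apply]
  rw [this, Matrix.mul_add, Matrix.add_mul, Matrix.mul_smul, Matrix.smul_mul]

lemma Lw_mulVec (a : Fin n → ℝ) (x : Fin n → ℝ) :
    Lw sE tE w a *ᵥ x =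
      (gradMat sE tE w)ᵀ *ᵥ ((Matrix.diagonal (fun e => (a (sE e) + a (tE e)) / 2)) *ᵥ
        (gradMat sE tE w *ᵥ x)) := by
  unfold Lw
  rw [← mulVec_mulVec, ← mulVec_mulVec]

lemma quad_Lw (a : Fin n → ℝ) (x : Fin n → ℝ) :
    x ⬝ᵥ (Lw sE tE w a *ᵥ x) =
      ∑ e : E, ((a (sE e) + a (tE e)) / 2) * ((gradMat sE tE w *ᵥ x) e)^2 := by
  rw [Lw_mulVec, dot_transpose_mulVec]
  simp [dotProduct, mulVec_diagonal]
  refine Finset.sum_congr rfl fun e _ => by ring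

lemma vecMulVec_mulVec' (u v x : Fin n → ℝ) :
    vecMulVec u v *ᵥ x = (v ⬝ᵥ x) • u := by
  funext i
  simp only [mulVec, vecMulVec_apply, dotProduct, Pi.smul_apply, smul_eq_mul, Finset.mul_sum]
  rw [Finset.sum_mul]
  exact Finset.sum_congr rfl fun j _ => by ring

end aux

section deriv

variable {n : ℕ}

lemma hasDerivAt_entry {g : ℝ → Matrix (Fin n) (Fin n) ℝ} {D : Matrix (Fin n) (Fin n) ℝ} {x : ℝ}
    (hg : HasDerivAt g D x) (i j : Fin n) :
    HasDerivAt (fun ε => g ε i j) (D i j) x := by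
  replace hg := hasDerivAt_iff_tendsto_slope.mp hg
  rw [hasDerivAt_iff_tendsto_slope]
  have hcont : Continuous (fun M : Matrix (Fin n) (Fin n) ℝ => M i j) :=
    (continuous_apply j).comp (continuous_apply i)
  refine ((hcont.tendsto D).comp hg).congr fun ε => ?_
  simp [slope, Function.comp, Matrix.smul_apply, Matrix.sub_apply]

lemma hasDerivAt_vec_entry {g : ℝ → (Fin n → ℝ)} {D : Fin n → ℝ} {x : ℝ}
    (hg : HasDerivAt g D x) (i : Fin n) :
    HasDerivAt (fun ε => g ε i) (D i) x := by
  rw [hasDerivAt_iff_tendsto_slope] at hg ⊢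
  refine (((continuous_apply i).tendsto D).comp hg).congr fun ε => ?_
  simp [slope, Function.comp, Pi.smul_apply, Pi.sub_apply]

lemma hasDerivAt_quadForm {u v : ℝ → Fin n → ℝ} {M : ℝ → Matrix (Fin n) (Fin n) ℝ}
    {u' v' : Fin n → ℝ} {M' : Matrix (Fin n) (Fin n) ℝ} {x : ℝ}
    (hu : ∀ i, HasDerivAt (fun ε => u ε i) (u' i) x)
    (hv : ∀ i, HasDerivAt (fun ε => v ε i) (v' i) x)
    (hM : ∀ i j, HasDerivAt (fun ε => M ε i j) (M' i j) x) :
    HasDerivAt (fun ε => u ε ⬝ᵥ (M ε *ᵥ v ε))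
      (u' ⬝ᵥ (M x *ᵥ v x) + (u x ⬝ᵥ (M' *ᵥ v x) + u x ⬝ᵥ (M x *ᵥ v'))) x := by
  have key : ∀ i ∈ Finset.univ, HasDerivAt (fun ε => u ε i * ∑ j, M ε i j * v ε j)
      (u' i * (∑ j, M x i j * v x j)
        + u x i * (∑ j, (M' i j * v x j + M x i j * v' j))) x :=
    fun i _ => (hu i).mul (HasDerivAt.fun_sum fun j _ => (hM i j).mul (hv j))
  have hsum := HasDerivAt.fun_sum key
  have e1 : ∀ (a b : Fin n → ℝ) (N : Matrix (Fin n) (Fin n) ℝ),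
      a ⬝ᵥ (N *ᵥ b) = ∑ i, a i * ∑ j, N i j * b j := fun a b N => rfl
  refine hsum.congr_deriv (Eq.symm ?_)
  rw [e1, e1, e1, ← Finset.sum_add_distrib, ← Finset.sum_add_distrib]
  exact Finset.sum_congr rfl fun i _ => by rw [Finset.sum_add_distrib]; ring

end deriv

section inv

variable {n : ℕ}

lemma inv_family_diff {g : ℝ → Matrix (Fin n) (Fin n) ℝ} {C B : Matrix (Fin n) (Fin n) ℝ}
    {δ : ℝ} (hg : ∀ ε : ℝ, |ε| < δ → g ε * (C + ε • B) = 1 ∧ (C + ε • B) * g ε = 1)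
    {ε ε' : ℝ} (hε : |ε| < δ) (hε' : |ε'| < δ) :
    g ε - g ε' = (ε' - ε) • (g ε * B * g ε') := by
  have h1 := (hg ε hε).1
  have h2 := (hg ε' hε').2
  calc g ε - g ε'
      = g ε * ((C + ε' • B) * g ε') - (g ε * (C + ε • B)) * g ε' := by
        rw [h2, h1, Matrix.mul_one, Matrix.one_mul]
    _ = g ε * ((C + ε' • B) - (C + ε • B)) * g ε' := by
        rw [Matrix.mul_sub, Matrix.sub_mul, ← Matrix.mul_assoc]
    _ = (ε' - ε) • (g ε * B * g ε') := by
        rw [add_sub_add_left_eq_sub, ← sub_smul, Matrix.mul_smul, Matrix.smul_mul]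

lemma hasDerivAt_inv_family {g : ℝ → Matrix (Fin n) (Fin n) ℝ} {C B : Matrix (Fin n) (Fin n) ℝ}
    {δ : ℝ} (hg : ∀ ε : ℝ, |ε| < δ → g ε * (C + ε • B) = 1 ∧ (C + ε • B) * g ε = 1)
    (hcont : Continuous g) {ε₀ : ℝ} (hε₀ : |ε₀| < δ) :
    HasDerivAt g (-(g ε₀ * B * g ε₀)) ε₀ := by
  refine hasDerivAt_iff_tendsto_slope.mpr ?_
  have hc : Filter.Tendsto (fun ε => -(g ε * B * g ε₀)) (nhdsWithin ε₀ {ε₀}ᶜ)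
      (nhds (-(g ε₀ * B * g ε₀))) :=
    (((hcont.matrix_mul continuous_const).matrix_mul continuous_const).neg.tendsto ε₀).mono_left
      nhdsWithin_le_nhds
  have hball : ∀ᶠ ε in nhds ε₀, |ε| < δ :=
    (isOpen_lt continuous_abs continuous_const).eventually_mem (by simpa using hε₀)
  refine Filter.Tendsto.congr' ?_ hc
  filter_upwards [hball.filter_mono nhdsWithin_le_nhds, self_mem_nhdsWithin] with ε hε hne
  have hslope : slope g ε₀ ε = (ε - ε₀)⁻¹ • (g ε - g ε₀) := by simp [slope, vsub_eq_sub]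
  have hne' : ε - ε₀ ≠ 0 := sub_ne_zero.mpr hne
  have hval : (ε - ε₀)⁻¹ * (ε₀ - ε) = -1 := by field_simp; ring
  rw [hslope, inv_family_diff hg hε hε₀, smul_smul, hval, neg_one_smul]

lemma hasDerivAt_inv_family2 {g : ℝ → Matrix (Fin n) (Fin n) ℝ} {C B : Matrix (Fin n) (Fin n) ℝ}
    {δ : ℝ} (hg : ∀ ε : ℝ, |ε| < δ → g ε * (C + ε • B) = 1 ∧ (C + ε • B) * g ε = 1)
    (hcont : Continuous g) {ε₀ : ℝ} (hε₀ : |ε₀| < δ) :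
    HasDerivAt (fun ε => -(g ε * B * g ε)) ((2:ℝ) • (g ε₀ * B * g ε₀ * B * g ε₀)) ε₀ := by
  refine hasDerivAt_iff_tendsto_slope.mpr ?_
  have hc : Filter.Tendsto (fun ε => g ε * B * g ε₀ * B * g ε + g ε₀ * B * (g ε * B * g ε₀))
      (nhdsWithin ε₀ {ε₀}ᶜ) (nhds ((2:ℝ) • (g ε₀ * B * g ε₀ * B * g ε₀))) := by
    have hlim : Filter.Tendsto (fun ε => g ε * B * g ε₀ * B * g ε + g ε₀ * B * (g ε * B * g ε₀))
        (nhds ε₀) (nhds (g ε₀ * B * g ε₀ * B * g ε₀ + g ε₀ * B * (g ε₀ * B * g ε₀))) := by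
      have c1 : Continuous (fun ε => g ε * B * g ε₀ * B * g ε) :=
        ((((hcont.matrix_mul continuous_const).matrix_mul continuous_const).matrix_mul
          continuous_const).matrix_mul hcont)
      have c2 : Continuous (fun ε => g ε₀ * B * (g ε * B * g ε₀)) :=
        continuous_const.matrix_mul ((hcont.matrix_mul continuous_const).matrix_mul
          continuous_const)
      exact (c1.add c2).tendsto ε₀
    have : g ε₀ * B * g ε₀ * B * g ε₀ + g ε₀ * B * (g ε₀ * B * g ε₀)
        = (2:ℝ) • (g ε₀ * B * g ε₀ * B * g ε₀) := by
      rw [two_smul]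
      congr 1
      simp only [Matrix.mul_assoc]
    rw [← this]
    exact hlim.mono_left nhdsWithin_le_nhds
  have hball : ∀ᶠ ε in nhds ε₀, |ε| < δ :=
    (isOpen_lt continuous_abs continuous_const).eventually_mem (by simpa using hε₀)
  refine Filter.Tendsto.congr' ?_ hc
  filter_upwards [hball.filter_mono nhdsWithin_le_nhds, self_mem_nhdsWithin] with ε hε hne
  have hne' : ε - ε₀ ≠ 0 := sub_ne_zero.mpr hne
  have hslope : slope (fun ε => -(g ε * B * g ε)) ε₀ ε
      = (ε - ε₀)⁻¹ • (-(g ε * B * g ε) - -(g ε₀ * B * g ε₀)) := by simp [slope, vsub_eq_sub]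
  have hsplit : -(g ε * B * g ε) - -(g ε₀ * B * g ε₀)
      = -((g ε - g ε₀) * B * g ε + g ε₀ * B * (g ε - g ε₀)) := by
    rw [Matrix.sub_mul, Matrix.sub_mul, Matrix.mul_sub]
    abel
  rw [hslope, hsplit, inv_family_diff hg hε hε₀]
  rw [Matrix.smul_mul, Matrix.smul_mul, Matrix.mul_smul, ← smul_add]
  have hval : (ε - ε₀)⁻¹ * (ε₀ - ε) = -1 := by field_simp; ring
  rw [smul_neg, smul_smul, hval, neg_one_smul, neg_neg]

end inv

section ones

variable {n : ℕ} {E : Type} [Fintype E] [DecidableEq E]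

lemma onesVec_dot_zero {x : Fin n → ℝ} (hx : ∑ i, x i = 0) : onesVec n ⬝ᵥ x = 0 := by
  simp only [onesVec, dotProduct]
  rw [← Finset.mul_sum, hx, mul_zero]

lemma onesVec_selfdot (hn : 0 < n) : onesVec n ⬝ᵥ onesVec n = 1 := by
  simp only [onesVec, dotProduct, Finset.sum_const, Finset.card_univ, Fintype.card_fin,
    nsmul_eq_mul]
  rw [div_mul_div_comm, one_mul, Real.mul_self_sqrt (Nat.cast_nonneg n)]
  field_simp

lemma gradMat_ones_zero (sE tE : E → Fin n) (w : E → ℝ) (hw : ∀ e, 0 < w e)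
    (ρ : Fin n → ℝ) (hρ : ∀ i, 0 < ρ i) (K : Matrix (Fin n) (Fin n) ℝ)
    (hpinvt : Lw sE tE w ρ * K * Lw sE tE w ρ = Lw sE tE w ρ ∧
      K * Lw sE tE w ρ * K = K ∧ (Lw sE tE w ρ * K)ᵀ = Lw sE tE w ρ * K ∧
      (K * Lw sE tE w ρ)ᵀ = K * Lw sE tE w ρ)
    (hpsd : K.PosSemidef)
    (hinv : (K + vecMulVec (onesVec n) (onesVec n)) *
      (Lw sE tE w ρ + vecMulVec (onesVec n) (onesVec n)) = 1) :
    gradMat sE tE w *ᵥ onesVec n = 0 := by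
  rcases Nat.eq_zero_or_pos n with hn | hn
  · subst hn
    funext e
    simp [mulVec, dotProduct]
  set u := onesVec n with hu
  set U := vecMulVec u u with hU
  set L := Lw sE tE w ρ with hL
  have huu : u ⬝ᵥ u = 1 := onesVec_selfdot hn
  -- main scalar identity
  have h1 : u ⬝ᵥ (((K + U) * (L + U)) *ᵥ u) = 1 := by
    rw [hinv, Matrix.one_mulVec, huu]
  have hUv : ∀ x : Fin n → ℝ, U *ᵥ x = (u ⬝ᵥ x) • u := fun x => vecMulVec_mulVec' u u x
  have hKUu : (K * U) *ᵥ u = K *ᵥ u := by rw [← mulVec_mulVec, hUv u, huu, one_smul]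
  have hULu : (U * L) *ᵥ u = (u ⬝ᵥ (L *ᵥ u)) • u := by rw [← mulVec_mulVec, hUv]
  have hUUu : (U * U) *ᵥ u = u := by
    rw [← mulVec_mulVec, hUv u, huu, one_smul, hUv u, huu, one_smul]
  have hexp : ((K + U) * (L + U)) *ᵥ u
      = (K * L) *ᵥ u + (K *ᵥ u + ((u ⬝ᵥ (L *ᵥ u)) • u + u)) := by
    rw [Matrix.add_mul, Matrix.mul_add, Matrix.mul_add, add_mulVec, add_mulVec, add_mulVec,
      hKUu, hULu, hUUu]
    abel
  have hsplit : u ⬝ᵥ ((K * L) *ᵥ u) + (u ⬝ᵥ (K *ᵥ u) + ((u ⬝ᵥ (L *ᵥ u)) * (u ⬝ᵥ u) + 1)) = 1 := by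
    have := h1
    rw [hexp] at this
    simpa [dotProduct_add, dotProduct_smul, smul_eq_mul, huu] using this
  have he : 0 ≤ u ⬝ᵥ ((K * L) *ᵥ u) := by
    have hQQ : (K * L) * (K * L) = K * L := by
      calc (K * L) * (K * L) = (K * L * K) * L := by rw [Matrix.mul_assoc, ← Matrix.mul_assoc,
            ← Matrix.mul_assoc]
        _ = K * L := by rw [hpinvt.2.1]
    have hQT : (K * L)ᵀ = K * L := hpinvt.2.2.2
    have heq : u ⬝ᵥ ((K * L) *ᵥ u) = ((K * L) *ᵥ u) ⬝ᵥ ((K * L) *ᵥ u) := by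
      calc u ⬝ᵥ ((K * L) *ᵥ u) = u ⬝ᵥ ((K * L)ᵀ *ᵥ ((K * L) *ᵥ u)) := by
            rw [hQT, mulVec_mulVec, hQQ]
        _ = ((K * L) *ᵥ u) ⬝ᵥ ((K * L) *ᵥ u) := dot_transpose_mulVec _ _ _
    rw [heq]
    exact Finset.sum_nonneg fun i _ => mul_self_nonneg _
  have hc : 0 ≤ u ⬝ᵥ (K *ᵥ u) := by simpa using hpsd.dotProduct_mulVec_nonneg u
  have hdsum : u ⬝ᵥ (L *ᵥ u) = ∑ e : E, ((ρ (sE e) + ρ (tE e)) / 2) *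
      ((gradMat sE tE w *ᵥ u) e)^2 := quad_Lw sE tE w ρ u
  have hθpos : ∀ e : E, 0 < (ρ (sE e) + ρ (tE e)) / 2 := fun e => by
    have h1 := hρ (sE e); have h2 := hρ (tE e); linarith
  have hd : 0 ≤ u ⬝ᵥ (L *ᵥ u) := by
    rw [hdsum]
    exact Finset.sum_nonneg fun e _ => mul_nonneg (le_of_lt (hθpos e)) (sq_nonneg _)
  have hd0 : u ⬝ᵥ (L *ᵥ u) = 0 := by
    rw [huu, mul_one] at hsplit
    linarith
  rw [hdsum] at hd0
  have hterm := (Finset.sum_eq_zero_iff_of_nonneg (fun e _ =>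
    mul_nonneg (le_of_lt (hθpos e)) (sq_nonneg _))).1 hd0
  funext e
  have hte := hterm e (Finset.mem_univ e)
  have hsq : ((gradMat sE tE w *ᵥ u) e)^2 = 0 := by
    rcases mul_eq_zero.1 hte with h | h
    · exact absurd h (ne_of_gt (hθpos e))
    · exact h
  have hz := pow_eq_zero_iff two_ne_zero |>.1 hsq
  simpa using hz

lemma Lw_mulVec_ones_zero (sE tE : E → Fin n) (w : E → ℝ)
    (hD : gradMat sE tE w *ᵥ onesVec n = 0) (a : Fin n → ℝ) :
    Lw sE tE w a *ᵥ onesVec n = 0 := by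
  rw [Lw_mulVec, hD, mulVec_zero, mulVec_zero]

lemma onesVec_dot_Lw_mulVec (sE tE : E → Fin n) (w : E → ℝ)
    (hD : gradMat sE tE w *ᵥ onesVec n = 0) (a : Fin n → ℝ) (x : Fin n → ℝ) :
    onesVec n ⬝ᵥ (Lw sE tE w a *ᵥ x) = 0 := by
  rw [← dot_symm_mulVec (Lw_transpose sE tE w a) (onesVec n) x,
    Lw_mulVec_ones_zero sE tE w hD a, zero_dotProduct]

end ones

section param

open MeasureTheory

lemma hasDerivAt_param_integral {F F' : ℝ → ℝ → ℝ} {δ : ℝ} (hδ : 0 < δ)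
    (hcF : Continuous fun p : ℝ × ℝ => F p.1 p.2)
    (hcF' : Continuous fun p : ℝ × ℝ => F' p.1 p.2)
    (hder : ∀ t ∈ Set.Icc (0:ℝ) 1, ∀ x : ℝ, |x| < δ → HasDerivAt (F t) (F' t x) x)
    {ε₀ : ℝ} (hε₀ : |ε₀| < δ/2) :
    HasDerivAt (fun x => ∫ t in Set.Ioc (0:ℝ) 1, F t x)
      (∫ t in Set.Ioc (0:ℝ) 1, F' t ε₀) ε₀ := by
  have hKc : IsCompact (Set.Icc (0:ℝ) 1 ×ˢ Set.Icc (-(3*δ/4)) (3*δ/4)) :=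
    isCompact_Icc.prod isCompact_Icc
  obtain ⟨C, hC⟩ := hKc.exists_bound_of_continuousOn hcF'.continuousOn
  have hmem : ∀ x : ℝ, x ∈ Metric.ball ε₀ (δ/4) → |x| < 3*δ/4 := by
    intro x hx
    rw [Metric.mem_ball, Real.dist_eq] at hx
    have h1 : |x| ≤ |x - ε₀| + |ε₀| := by
      have := abs_add_le (x - ε₀) ε₀
      simpa using this
    linarith
  refine (hasDerivAt_integral_of_dominated_loc_of_deriv_le
    (F := fun x t => F t x) (F' := fun x t => F' t x) (bound := fun _ => C)
    (Metric.ball_mem_nhds ε₀ (show (0:ℝ) < δ/4 by linarith)) ?_ ?_ ?_ ?_ ?_ ?_).2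
  · exact Filter.Eventually.of_forall fun x =>
      ((hcF.comp (continuous_id.prodMk continuous_const)).aestronglyMeasurable)
  · exact (hcF.comp (continuous_id.prodMk continuous_const)).integrableOn_Ioc
  · exact (hcF'.comp (continuous_id.prodMk continuous_const)).aestronglyMeasurable
  · refine (MeasureTheory.ae_restrict_mem measurableSet_Ioc).mono fun t ht x hx => ?_
    exact hC (t, x) ⟨Set.Ioc_subset_Icc_self ht,
      Set.mem_Icc.2 (abs_le.1 (le_of_lt (hmem x hx)))⟩
  · exact (MeasureTheory.integrableOn_const measure_Ioc_lt_top.ne)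
  · refine (MeasureTheory.ae_restrict_mem measurableSet_Ioc).mono fun t ht x hx => ?_
    exact hder t (Set.Ioc_subset_Icc_self ht) x (by have := hmem x hx; linarith)

end param

/-- Claim 3 and second variation of the energy: for
`g(μ) = L(μ)^† + u₀u₀ᵀ` (realized as `Gε t ε`, the inverse of `L(ρ(t)+εh(t))+u₀u₀ᵀ`),
one has `d²/dε² g(ρ+εh) = 2 g L(h) g L(h) g`, and the second variation of the energy
`E(ρ) = ∫₀¹ (1/2) ρ̇ᵀ L(ρ)^† ρ̇ dt` is
`δ²E(ρ)(h) = ∫₀¹ (ḣ − L(h)L(ρ)^†ρ̇)ᵀ L(ρ)^† (ḣ − L(h)L(ρ)^†ρ̇) dt ≥ 0`. -/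
theorem second_variation_of_energy
    {n : ℕ} {E : Type} [Fintype E] [DecidableEq E]
    (sE tE : E → Fin n) (w : E → ℝ)
    (hw : ∀ e, 0 < w e)
    (hconn : ∀ Φ : Fin n → ℝ, (∀ e, Φ (sE e) = Φ (tE e)) → ∀ i j, Φ i = Φ j)
    (ρc dρ h dh : ℝ → Fin n → ℝ)
    (hpos : ∀ t i, 0 < ρc t i) (hsum : ∀ t, ∑ i, ρc t i = 1)
    (hd1 : ∀ t, HasDerivAt ρc (dρ t) t) (hd2 : ∀ t, HasDerivAt h (dh t) t)
    (hcρ : Continuous ρc) (hcdρ : Continuous dρ) (hch : Continuous h)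
    (hcdh : Continuous dh)
    (hzero : ∀ t, ∑ i, h t i = 0) (hb0 : h 0 = 0) (hb1 : h 1 = 0)
    (Ldag : ℝ → Matrix (Fin n) (Fin n) ℝ)
    (hpinv : ∀ t ∈ Set.Icc (0:ℝ) 1, IsPInv (Lw sE tE w (ρc t)) (Ldag t))
    (hpsdL : ∀ t ∈ Set.Icc (0:ℝ) 1, (Ldag t).PosSemidef)
    (Gε : ℝ → ℝ → Matrix (Fin n) (Fin n) ℝ) (δ : ℝ) (hδ : 0 < δ)
    (hG : ∀ t ∈ Set.Icc (0:ℝ) 1, ∀ ε : ℝ, |ε| < δ →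
      Gε t ε * (Lw sE tE w (fun i => ρc t i + ε * h t i) +
        vecMulVec (onesVec n) (onesVec n)) = 1 ∧
      (Lw sE tE w (fun i => ρc t i + ε * h t i) +
        vecMulVec (onesVec n) (onesVec n)) * Gε t ε = 1)
    (hGcont : Continuous fun p : ℝ × ℝ => Gε p.1 p.2)
    (hG0 : ∀ t ∈ Set.Icc (0:ℝ) 1, Gε t 0 = Ldag t + vecMulVec (onesVec n) (onesVec n)) :
    (∀ t ∈ Set.Icc (0:ℝ) 1, ∀ ε : ℝ, |ε| < δ →
      iteratedDeriv 2 (Gε t) ε =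
        (2 : ℝ) • (Gε t ε * Lw sE tE w (h t) * Gε t ε * Lw sE tE w (h t) * Gε t ε)) ∧
    (iteratedDeriv 2
      (fun ε : ℝ => ∫ t in (0:ℝ)..1,
        (1/2 : ℝ) * ((fun i => dρ t i + ε * dh t i) ⬝ᵥ
          (Gε t ε *ᵥ fun i => dρ t i + ε * dh t i))) 0 =
      ∫ t in (0:ℝ)..1,
        (dh t - Lw sE tE w (h t) *ᵥ (Ldag t *ᵥ dρ t)) ⬝ᵥ
          (Ldag t *ᵥ (dh t - Lw sE tE w (h t) *ᵥ (Ldag t *ᵥ dρ t)))) ∧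
    0 ≤ ∫ t in (0:ℝ)..1,
        (dh t - Lw sE tE w (h t) *ᵥ (Ldag t *ᵥ dρ t)) ⬝ᵥ
          (Ldag t *ᵥ (dh t - Lw sE tE w (h t) *ᵥ (Ldag t *ᵥ dρ t))) := by
  classical
  set U : Matrix (Fin n) (Fin n) ℝ := vecMulVec (onesVec n) (onesVec n) with hUdef
  have hGaff : ∀ t ∈ Set.Icc (0:ℝ) 1, ∀ ε : ℝ, |ε| < δ →
      Gε t ε * ((Lw sE tE w (ρc t) + U) + ε • Lw sE tE w (h t)) = 1 ∧
      ((Lw sE tE w (ρc t) + U) + ε • Lw sE tE w (h t)) * Gε t ε = 1 := by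
    intro t ht ε hε
    have haff : Lw sE tE w (fun i => ρc t i + ε * h t i) + U
        = (Lw sE tE w (ρc t) + U) + ε • Lw sE tE w (h t) := by
      rw [Lw_affine]; abel
    have hin := hG t ht ε hε
    rw [haff] at hin
    exact hin
  have hGcont' : ∀ t : ℝ, Continuous (Gε t) := fun t =>
    hGcont.comp (Continuous.prodMk_right t)
  have hgd1 : ∀ t ∈ Set.Icc (0:ℝ) 1, ∀ ε₀ : ℝ, |ε₀| < δ →
      HasDerivAt (Gε t) (-(Gε t ε₀ * Lw sE tE w (h t) * Gε t ε₀)) ε₀ := fun t ht ε₀ hx =>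
    hasDerivAt_inv_family (hGaff t ht) (hGcont' t) hx
  have hgd2 : ∀ t ∈ Set.Icc (0:ℝ) 1, ∀ ε₀ : ℝ, |ε₀| < δ →
      HasDerivAt (fun ε => -(Gε t ε * Lw sE tE w (h t) * Gε t ε))
        ((2:ℝ) • (Gε t ε₀ * Lw sE tE w (h t) * Gε t ε₀ * Lw sE tE w (h t) * Gε t ε₀)) ε₀ :=
    fun t ht ε₀ hx => hasDerivAt_inv_family2 (hGaff t ht) (hGcont' t) hx
  have part1 : ∀ t ∈ Set.Icc (0:ℝ) 1, ∀ ε : ℝ, |ε| < δ →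
      iteratedDeriv 2 (Gε t) ε =
        (2 : ℝ) • (Gε t ε * Lw sE tE w (h t) * Gε t ε * Lw sE tE w (h t) * Gε t ε) := by
    intro t ht ε hε
    have hball : ∀ᶠ x in nhds ε, |x| < δ :=
      (isOpen_lt continuous_abs continuous_const).eventually_mem (by simpa using hε)
    have he : deriv (Gε t) =ᶠ[nhds ε] fun x => -(Gε t x * Lw sE tE w (h t) * Gε t x) :=
      hball.mono fun x hx => (hgd1 t ht x hx).deriv
    rw [iteratedDeriv_succ, iteratedDeriv_one]
    exact he.deriv_eq.trans (hgd2 t ht ε hε).deriv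
  have part3 : 0 ≤ ∫ t in (0:ℝ)..1,
      (dh t - Lw sE tE w (h t) *ᵥ (Ldag t *ᵥ dρ t)) ⬝ᵥ
        (Ldag t *ᵥ (dh t - Lw sE tE w (h t) *ᵥ (Ldag t *ᵥ dρ t))) := by
    apply intervalIntegral.integral_nonneg zero_le_one
    intro t ht
    simpa using (hpsdL t ht).dotProduct_mulVec_nonneg (dh t - Lw sE tE w (h t) *ᵥ (Ldag t *ᵥ dρ t))
  -- zero-sum facts
  have hdρ0 : ∀ t : ℝ, ∑ i, dρ t i = 0 := by
    intro t
    have h1 : HasDerivAt (fun s => ∑ i, ρc s i) (∑ i, dρ t i) t :=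
      HasDerivAt.fun_sum fun i _ => hasDerivAt_vec_entry (hd1 t) i
    have h2 : (fun s => ∑ i, ρc s i) = fun _ => (1:ℝ) := funext hsum
    rw [h2] at h1
    exact h1.unique (hasDerivAt_const t 1)
  have hdh0 : ∀ t : ℝ, ∑ i, dh t i = 0 := by
    intro t
    have h1 : HasDerivAt (fun s => ∑ i, h s i) (∑ i, dh t i) t :=
      HasDerivAt.fun_sum fun i _ => hasDerivAt_vec_entry (hd2 t) i
    have h2 : (fun s => ∑ i, h s i) = fun _ => (0:ℝ) := funext hzero
    rw [h2] at h1
    exact h1.unique (hasDerivAt_const t 0)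
  -- no loops
  have h0mem : (0:ℝ) ∈ Set.Icc (0:ℝ) 1 := by norm_num
  have habs0 : |(0:ℝ)| < δ := by simpa using hδ
  have hDu : gradMat sE tE w *ᵥ onesVec n = 0 := by
    have hρ0 : (fun i => ρc 0 i + 0 * h 0 i) = ρc 0 := by funext i; ring
    have hinv0 := (hG 0 h0mem 0 habs0).1
    rw [hρ0, hG0 0 h0mem] at hinv0
    exact gradMat_ones_zero sE tE w hw (ρc 0) (hpos 0) (Ldag 0) (hpinv 0 h0mem)
      (hpsdL 0 h0mem) hinv0
  have hBu : ∀ a : Fin n → ℝ, Lw sE tE w a *ᵥ onesVec n = 0 :=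
    Lw_mulVec_ones_zero sE tE w hDu
  have huB : ∀ (a x : Fin n → ℝ), onesVec n ⬝ᵥ (Lw sE tE w a *ᵥ x) = 0 :=
    onesVec_dot_Lw_mulVec sE tE w hDu
  have hUx : ∀ x : Fin n → ℝ, onesVec n ⬝ᵥ x = 0 → U *ᵥ x = 0 := fun x hx => by
    rw [hUdef, vecMulVec_mulVec', hx, zero_smul]
  -- the functions
  set Vf : ℝ → ℝ → Fin n → ℝ := fun t ε => fun i => dρ t i + ε * dh t i with hVf
  set Bf : ℝ → Matrix (Fin n) (Fin n) ℝ := fun t => Lw sE tE w (h t) with hBf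
  set F : ℝ → ℝ → ℝ := fun t ε => (1/2:ℝ) * (Vf t ε ⬝ᵥ (Gε t ε *ᵥ Vf t ε)) with hFdef
  set F' : ℝ → ℝ → ℝ := fun t ε => (1/2:ℝ) * (dh t ⬝ᵥ (Gε t ε *ᵥ Vf t ε) +
    (Vf t ε ⬝ᵥ (-(Gε t ε * Bf t * Gε t ε) *ᵥ Vf t ε) +
      Vf t ε ⬝ᵥ (Gε t ε *ᵥ dh t))) with hF'def
  set F'' : ℝ → ℝ → ℝ := fun t ε => (1/2:ℝ) * (
      ((0:Fin n → ℝ) ⬝ᵥ (Gε t ε *ᵥ Vf t ε) +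
        (dh t ⬝ᵥ (-(Gε t ε * Bf t * Gε t ε) *ᵥ Vf t ε) + dh t ⬝ᵥ (Gε t ε *ᵥ dh t)))
    + ((dh t ⬝ᵥ (-(Gε t ε * Bf t * Gε t ε) *ᵥ Vf t ε) +
        (Vf t ε ⬝ᵥ (((2:ℝ) • (Gε t ε * Bf t * Gε t ε * Bf t * Gε t ε)) *ᵥ Vf t ε) +
          Vf t ε ⬝ᵥ (-(Gε t ε * Bf t * Gε t ε) *ᵥ dh t)))
      + (dh t ⬝ᵥ (Gε t ε *ᵥ dh t) +
        (Vf t ε ⬝ᵥ (-(Gε t ε * Bf t * Gε t ε) *ᵥ dh t) +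
          Vf t ε ⬝ᵥ (Gε t ε *ᵥ (0:Fin n → ℝ)))))) with hF''def
  -- derivative facts
  have hVd : ∀ t : ℝ, ∀ x : ℝ, ∀ i, HasDerivAt (fun ε => Vf t ε i) (dh t i) x := by
    intro t x i
    simpa [hVf] using ((hasDerivAt_id x).mul_const (dh t i)).const_add (dρ t i)
  have hd_F : ∀ t ∈ Set.Icc (0:ℝ) 1, ∀ x : ℝ, |x| < δ → HasDerivAt (F t) (F' t x) x := by
    intro t ht x hx
    have hM : ∀ i j, HasDerivAt (fun ε => Gε t ε i j)
        ((-(Gε t x * Bf t * Gε t x)) i j) x := fun i j =>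
      hasDerivAt_entry (hgd1 t ht x hx) i j
    exact (hasDerivAt_quadForm (hVd t x) (hVd t x) hM).const_mul (1/2:ℝ)
  have hd_F' : ∀ t ∈ Set.Icc (0:ℝ) 1, ∀ x : ℝ, |x| < δ →
      HasDerivAt (F' t) (F'' t x) x := by
    intro t ht x hx
    have hM : ∀ i j, HasDerivAt (fun ε => Gε t ε i j)
        ((-(Gε t x * Bf t * Gε t x)) i j) x := fun i j =>
      hasDerivAt_entry (hgd1 t ht x hx) i j
    have hM2 : ∀ i j, HasDerivAt (fun ε => (-(Gε t ε * Bf t * Gε t ε)) i j)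
        (((2:ℝ) • (Gε t x * Bf t * Gε t x * Bf t * Gε t x)) i j) x := fun i j =>
      hasDerivAt_entry (hgd2 t ht x hx) i j
    have hdh : ∀ i, HasDerivAt (fun _ : ℝ => dh t i) ((0 : Fin n → ℝ) i) x := fun i =>
      hasDerivAt_const x (dh t i)
    have h1 := hasDerivAt_quadForm (u := fun _ => dh t) (v := Vf t) (M := Gε t)
      hdh (hVd t x) hM
    have h2 := hasDerivAt_quadForm (u := Vf t) (v := Vf t)
      (M := fun ε => -(Gε t ε * Bf t * Gε t ε)) (hVd t x) (hVd t x) hM2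
    have h3 := hasDerivAt_quadForm (u := Vf t) (v := fun _ => dh t) (M := Gε t)
      (hVd t x) hdh hM
    exact (h1.add (h2.add h3)).const_mul (1/2:ℝ)
  -- continuity facts
  have hcVf : Continuous fun p : ℝ × ℝ => Vf p.1 p.2 := by
    refine continuous_pi fun i => ?_
    exact ((continuous_apply i).comp (hcdρ.comp continuous_fst)).add
      (continuous_snd.mul ((continuous_apply i).comp (hcdh.comp continuous_fst)))
  have hcBf : Continuous Bf := by
    refine ((continuous_const.matrix_mul (Continuous.matrix_diagonal ?_)).matrix_mul
      continuous_const)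
    exact continuous_pi fun e => (((continuous_apply (sE e)).comp hch).add
      ((continuous_apply (tE e)).comp hch)).div_const 2
  have hcdht : Continuous fun p : ℝ × ℝ => dh p.1 := hcdh.comp continuous_fst
  have hcg' : Continuous fun p : ℝ × ℝ => -(Gε p.1 p.2 * Bf p.1 * Gε p.1 p.2) :=
    ((hGcont.matrix_mul (hcBf.comp continuous_fst)).matrix_mul hGcont).neg
  have hcg'' : Continuous fun p : ℝ × ℝ =>
      (2:ℝ) • (Gε p.1 p.2 * Bf p.1 * Gε p.1 p.2 * Bf p.1 * Gε p.1 p.2) :=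
    ((((hGcont.matrix_mul (hcBf.comp continuous_fst)).matrix_mul hGcont).matrix_mul
      (hcBf.comp continuous_fst)).matrix_mul hGcont).const_smul (2:ℝ)
  have hcF : Continuous fun p : ℝ × ℝ => F p.1 p.2 :=
    continuous_const.mul (hcVf.dotProduct (hGcont.matrix_mulVec hcVf))
  have hcF' : Continuous fun p : ℝ × ℝ => F' p.1 p.2 :=
    continuous_const.mul ((hcdht.dotProduct (hGcont.matrix_mulVec hcVf)).add
      ((hcVf.dotProduct (hcg'.matrix_mulVec hcVf)).add
        (hcVf.dotProduct (hGcont.matrix_mulVec hcdht))))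
  have hcF'' : Continuous fun p : ℝ × ℝ => F'' p.1 p.2 := by
    refine continuous_const.mul (Continuous.add ?_ (Continuous.add ?_ ?_))
    · exact (continuous_const.dotProduct (hGcont.matrix_mulVec hcVf)).add
        ((hcdht.dotProduct (hcg'.matrix_mulVec hcVf)).add
          (hcdht.dotProduct (hGcont.matrix_mulVec hcdht)))
    · exact (hcdht.dotProduct (hcg'.matrix_mulVec hcVf)).add
        ((hcVf.dotProduct (hcg''.matrix_mulVec hcVf)).add
          (hcVf.dotProduct (hcg'.matrix_mulVec hcdht)))
    · exact (hcdht.dotProduct (hGcont.matrix_mulVec hcdht)).add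
        ((hcVf.dotProduct (hcg'.matrix_mulVec hcdht)).add
          (hcVf.dotProduct (hGcont.matrix_mulVec continuous_const)))
  -- differentiate under the integral
  have habs0' : |(0:ℝ)| < δ/2 := by rw [abs_zero]; linarith
  have hA : ∀ ε₀ : ℝ, |ε₀| < δ/2 →
      HasDerivAt (fun x => ∫ t in Set.Ioc (0:ℝ) 1, F t x)
        (∫ t in Set.Ioc (0:ℝ) 1, F' t ε₀) ε₀ := fun ε₀ hx =>
    hasDerivAt_param_integral hδ hcF hcF' hd_F hx
  have hB0 : HasDerivAt (fun x => ∫ t in Set.Ioc (0:ℝ) 1, F' t x)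
      (∫ t in Set.Ioc (0:ℝ) 1, F'' t 0) 0 :=
    hasDerivAt_param_integral hδ hcF' hcF'' hd_F' habs0'
  have hDeq : deriv (fun x => ∫ t in Set.Ioc (0:ℝ) 1, F t x)
      =ᶠ[nhds 0] fun x => ∫ t in Set.Ioc (0:ℝ) 1, F' t x :=
    ((isOpen_lt continuous_abs continuous_const).eventually_mem habs0').mono
      fun x hx => (hA x hx).deriv
  have main : deriv (deriv (fun x => ∫ t in Set.Ioc (0:ℝ) 1, F t x)) 0
      = ∫ t in Set.Ioc (0:ℝ) 1, F'' t 0 := by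
    rw [hDeq.deriv_eq]
    exact hB0.deriv
  -- pointwise identification of the second derivative at 0
  have pointwise : ∀ t ∈ Set.Icc (0:ℝ) 1, F'' t 0 =
      (dh t - Lw sE tE w (h t) *ᵥ (Ldag t *ᵥ dρ t)) ⬝ᵥ
        (Ldag t *ᵥ (dh t - Lw sE tE w (h t) *ᵥ (Ldag t *ᵥ dρ t))) := by
    intro t ht
    have hg0 : Gε t 0 = Ldag t + U := hG0 t ht
    have hV0 : Vf t 0 = dρ t := by
      funext i
      show dρ t i + 0 * dh t i = dρ t i
      ring
    have hKT : (Ldag t)ᵀ = Ldag t := by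
      have hh := (hpsdL t ht).1
      rwa [Matrix.IsHermitian, conjTranspose_eq_transpose_of_trivial] at hh
    have hBT : (Bf t)ᵀ = Bf t := Lw_transpose sE tE w (h t)
    have hudρ : onesVec n ⬝ᵥ dρ t = 0 := onesVec_dot_zero (hdρ0 t)
    have hudh : onesVec n ⬝ᵥ dh t = 0 := onesVec_dot_zero (hdh0 t)
    have hP : ∀ x : Fin n → ℝ, onesVec n ⬝ᵥ x = 0 → Gε t 0 *ᵥ x = Ldag t *ᵥ x := by
      intro x hx
      rw [hg0, add_mulVec, hUx x hx, add_zero]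
    have hPB : ∀ x : Fin n → ℝ, Gε t 0 *ᵥ (Bf t *ᵥ x) = Ldag t *ᵥ (Bf t *ᵥ x) :=
      fun x => hP _ (huB _ _)
    have m1 : (-(Gε t 0 * Bf t * Gε t 0)) *ᵥ dρ t
        = -(Ldag t *ᵥ (Bf t *ᵥ (Ldag t *ᵥ dρ t))) := by
      rw [neg_mulVec, ← mulVec_mulVec, ← mulVec_mulVec, hP _ hudρ, hPB]
    have m1' : (-(Gε t 0 * Bf t * Gε t 0)) *ᵥ dh t
        = -(Ldag t *ᵥ (Bf t *ᵥ (Ldag t *ᵥ dh t))) := by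
      rw [neg_mulVec, ← mulVec_mulVec, ← mulVec_mulVec, hP _ hudh, hPB]
    have m2 : ((2:ℝ) • (Gε t 0 * Bf t * Gε t 0 * Bf t * Gε t 0)) *ᵥ dρ t
        = (2:ℝ) • (Ldag t *ᵥ (Bf t *ᵥ (Ldag t *ᵥ (Bf t *ᵥ (Ldag t *ᵥ dρ t))))) := by
      rw [smul_mulVec, ← mulVec_mulVec, ← mulVec_mulVec, ← mulVec_mulVec,
        ← mulVec_mulVec, hP _ hudρ, hPB, hPB]
    have hG0dh : Gε t 0 *ᵥ dh t = Ldag t *ᵥ dh t := hP _ hudh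
    have hmove1 : (Bf t *ᵥ (Ldag t *ᵥ dρ t)) ⬝ᵥ (Ldag t *ᵥ dh t)
        = dρ t ⬝ᵥ (Ldag t *ᵥ (Bf t *ᵥ (Ldag t *ᵥ dh t))) := by
      rw [dot_symm_mulVec hBT, dot_symm_mulVec hKT]
    have hmove2 : (Bf t *ᵥ (Ldag t *ᵥ dρ t)) ⬝ᵥ (Ldag t *ᵥ (Bf t *ᵥ (Ldag t *ᵥ dρ t)))
        = dρ t ⬝ᵥ (Ldag t *ᵥ (Bf t *ᵥ (Ldag t *ᵥ (Bf t *ᵥ (Ldag t *ᵥ dρ t))))) := by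
      rw [dot_symm_mulVec hBT, dot_symm_mulVec hKT]
    have hBfr : Lw sE tE w (h t) = Bf t := rfl
    rw [hF''def]
    simp only [hV0, m1, m1', m2, hG0dh, hBfr, zero_dotProduct, mulVec_zero, dotProduct_zero,
      dotProduct_neg, dotProduct_smul, smul_eq_mul]
    rw [mulVec_sub, sub_dotProduct, dotProduct_sub, dotProduct_sub, hmove1, hmove2]
    ring
  -- assemble part 2
  have part2 : iteratedDeriv 2
      (fun ε : ℝ => ∫ t in (0:ℝ)..1,
        (1/2 : ℝ) * ((fun i => dρ t i + ε * dh t i) ⬝ᵥ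
          (Gε t ε *ᵥ fun i => dρ t i + ε * dh t i))) 0 =
      ∫ t in (0:ℝ)..1,
        (dh t - Lw sE tE w (h t) *ᵥ (Ldag t *ᵥ dρ t)) ⬝ᵥ
          (Ldag t *ᵥ (dh t - Lw sE tE w (h t) *ᵥ (Ldag t *ᵥ dρ t))) := by
    have e0 : (fun ε : ℝ => ∫ t in (0:ℝ)..1,
        (1/2 : ℝ) * ((fun i => dρ t i + ε * dh t i) ⬝ᵥ
          (Gε t ε *ᵥ fun i => dρ t i + ε * dh t i)))
        = fun x => ∫ t in Set.Ioc (0:ℝ) 1, F t x := by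
      funext x
      rw [intervalIntegral.integral_of_le zero_le_one]
    rw [iteratedDeriv_succ, iteratedDeriv_one, e0, main,
      intervalIntegral.integral_of_le zero_le_one]
    exact MeasureTheory.setIntegral_congr_fun measurableSet_Ioc
      (fun t ht => pointwise t (Set.Ioc_subset_Icc_self ht))
  exact ⟨part1, part2, part3⟩
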